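/- Let P be a finite poset and π, π' two distinct maximal chains of P. If the disorder graph Δ(π, π') is connected, then π \ π' is a saturated subset of P: whenever u, w ∈ π \ π', v ∈ π, and u < v < w, it follows that v ∈ π \ π'. -/

import Mathlib

variable {P : Type*} [Fintype P] [PartialOrder P]

/-- The disorder graph `Δ(π, π')`: vertices are the elements of the symmetric difference of
`π` and `π'`, with an edge between incomparable elements. -/
def disorderGraph (π π' : Set P) : SimpleGraph ((π \ π') ∪ (π' \ π) : Set P) where
  Adj u v := ¬(u : P) ≤ (v : P) ∧ ¬(v : P) ≤ (u : P)
  symm := ⟨fun u v h => ⟨h.2, h.1⟩⟩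
  loopless := ⟨fun u h => h.1 le_rfl⟩

/-- If the disorder graph of two distinct maximal chains is connected, then `π \ π'` is
saturated: any element of `π` strictly between two elements of `π \ π'` lies in `π \ π'`. -/
theorem saturated_of_disorder_connected (π π' : Set P)
    (hπ : IsMaxChain (· ≤ ·) π) (hπ' : IsMaxChain (· ≤ ·) π') (hne : π ≠ π')
    (hconn : (disorderGraph π π').Connected)
    (u w : P) (hu : u ∈ π \ π') (hw : w ∈ π \ π')
    (v : P) (hv : v ∈ π) (huv : u < v) (hvw : v < w) :
    v ∈ π \ π' := by
  refine ⟨hv, fun hv' => ?_⟩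
  have key : ∀ x : ((π \ π') ∪ (π' \ π) : Set P), (x : P) < v ∨ v < (x : P) := by
    rintro ⟨x, hx | hx⟩
    · have hxv : x ≠ v := fun h => hx.2 (h ▸ hv')
      rcases hπ.1 hx.1 hv hxv with h | h
      · exact Or.inl (lt_of_le_of_ne h hxv)
      · exact Or.inr (lt_of_le_of_ne h (Ne.symm hxv))
    · have hxv : x ≠ v := fun h => hx.2 (h ▸ hv)
      rcases hπ'.1 hx.1 hv' hxv with h | h
      · exact Or.inl (lt_of_le_of_ne h hxv)
      · exact Or.inr (lt_of_le_of_ne h (Ne.symm hxv))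
  have step : ∀ {a b : ((π \ π') ∪ (π' \ π) : Set P)},
      (disorderGraph π π').Adj a b → (a : P) < v → (b : P) < v := by
    intro a b hab ha
    rcases key b with h | h
    · exact h
    · exact absurd (ha.trans h).le hab.1
  have main : ∀ {a b : ((π \ π') ∪ (π' \ π) : Set P)},
      (disorderGraph π π').Walk a b → (a : P) < v → (b : P) < v := by
    intro a b p
    induction p with
    | nil => exact id
    | cons h _ ih => exact fun ha => ih (step h ha)
  obtain ⟨p⟩ := hconn ⟨u, Or.inl hu⟩ ⟨w, Or.inl hw⟩
  exact lt_asymm hvw (main p huv)
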